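/- For all integers k > 0 and n > 0, log₂ C_k(n) > (n/k)^(k-1) · log₂(n/k), where C_k(n) is the index of Simon's congruence ∼ₙ over a k-letter alphabet and the right-hand side is computed over the reals. -/

import Mathlib

/-- Simon's congruence: `x ∼ₙ y` iff `x` and `y` have the same subwords
(scattered subsequences) of length at most `n`. -/
def SimonCong {α : Type*} (n : ℕ) (x y : List α) : Prop :=
  ∀ w : List α, w.length ≤ n → (w.Sublist x ↔ w.Sublist y)

/-- Simon's congruence as a setoid on words over `α`. -/
def simonSetoid (α : Type*) (n : ℕ) : Setoid (List α) :=
  ⟨SimonCong n,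
    ⟨fun _ _ _ => Iff.rfl,
     fun h w hw => (h w hw).symm,
     fun h1 h2 w hw => (h1 w hw).trans (h2 w hw)⟩⟩

/-- `simonIndex k n` is `C_k(n)`, the number of equivalence classes of
Simon's congruence `∼ₙ` over a `k`-letter alphabet. -/
noncomputable def simonIndex (k n : ℕ) : ℕ :=
  Nat.card (Quotient (simonSetoid (Fin k) n))

namespace SimonLB

open List

variable {γ : Type*} [DecidableEq γ]

/-- Join a list of blocks with a single separator letter `b` between consecutive blocks. -/
def joinB (b : γ) : List (List γ) → List γ
  | [] => []
  | [w] => w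
  | w :: x :: ws => w ++ b :: joinB b (x :: ws)

lemma count_joinB (b : γ) : ∀ (L : List (List γ)), L ≠ [] → (∀ w ∈ L, b ∉ w) →
    (joinB b L).count b = L.length - 1 := by
  intro L
  induction L with
  | nil => intro h; exact absurd rfl h
  | cons w ws ih =>
    intro _ hfree
    cases ws with
    | nil =>
      simp only [joinB, length_cons, length_nil]
      have : b ∉ w := hfree w (by simp)
      simp [List.count_eq_zero_of_not_mem this]
    | cons x ws' =>
      have hw : b ∉ w := hfree w (by simp)
      have : (joinB b (w :: x :: ws')) = w ++ b :: joinB b (x :: ws') := rfl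
      rw [this]
      rw [List.count_append, List.count_cons_self,
        List.count_eq_zero_of_not_mem hw,
        ih (by simp) (fun u hu => hfree u (by simp [hu]))]
      simp

lemma replicate_sublist_of_le_count {b : γ} {Z : List γ} {q : ℕ} (h : q ≤ Z.count b) :
    List.replicate q b <+ Z :=
  List.replicate_sublist_iff.mpr h

/-- Build direction: if `v` is a subword of block `i`, the test word embeds. -/
lemma key_build (b : γ) : ∀ (L : List (List γ)) (i : ℕ) (hi : i < L.length) (v : List γ),
    L ≠ [] → (∀ w ∈ L, b ∉ w) → v <+ L[i] →
    (List.replicate i b ++ v ++ List.replicate (L.length - 1 - i) b) <+ joinB b L := by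
  intro L
  induction L with
  | nil => intro i hi; simp at hi
  | cons w ws ih =>
    intro i hi v _ hfree hv
    cases i with
    | zero =>
      cases ws with
      | nil => simpa [joinB] using hv
      | cons x ws' =>
        have hrep : List.replicate ((w :: x :: ws').length - 1 - 0) b
            <+ b :: joinB b (x :: ws') := by
          apply replicate_sublist_of_le_count
          rw [List.count_cons_self,
            count_joinB b (x :: ws') (by simp) (fun u hu => hfree u (by simp [hu]))]
          simp
        have hj : joinB b (w :: x :: ws') = w ++ (b :: joinB b (x :: ws')) := rfl
        have hv' : v <+ w := by simpa using hv
        rw [hj]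
        simpa using List.Sublist.append hv' hrep
    | succ i' =>
      cases ws with
      | nil => simp at hi
      | cons x ws' =>
        have hstep : joinB b (w :: x :: ws') = w ++ (b :: joinB b (x :: ws')) := rfl
        have hi' : i' < (x :: ws').length := by simpa using hi
        have htail : (List.replicate i' b ++ v ++
            List.replicate ((x :: ws').length - 1 - i') b) <+ joinB b (x :: ws') := by
          apply ih i' hi' v (by simp) (fun u hu => hfree u (by simp [hu]))
          have : (x :: ws')[i'] = (w :: x :: ws')[i' + 1] := by simp
          rw [this]; exact hv
        rw [hstep]
        have h2 : (List.replicate (i' + 1) b ++ v ++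
            List.replicate ((w :: x :: ws').length - 1 - (i' + 1)) b)
            = b :: (List.replicate i' b ++ v ++
              List.replicate ((x :: ws').length - 1 - i') b) := by
          simp [List.replicate_succ, List.length_cons]
        rw [h2]
        exact (List.Sublist.cons₂ b htail).trans (List.sublist_append_right w _)

/-- Stripping one separator: if `b :: s` embeds in `w ++ b :: Z` with `b ∉ w`,
then `s` embeds in `Z`. -/
lemma strip_one (b : γ) : ∀ (w Z s : List γ), b ∉ w → (b :: s) <+ w ++ b :: Z → s <+ Z := by
  intro w
  induction w with
  | nil =>
    intro Z s _ h
    simp only [List.nil_append] at h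
    cases h with
    | cons _ h' => exact ((List.sublist_cons_self b s).trans h')
    | cons_cons _ h' => exact h'
  | cons c w' ih =>
    intro Z s hfree h
    have hcb : c ≠ b := fun hcb => hfree (by simp [hcb])
    rw [List.cons_append] at h
    cases h with
    | cons _ h' => exact ih Z s (fun hb => hfree (by simp [hb])) h'
    | cons_cons _ h' => simp at hfree

/-- Confinement: a `b`-free word followed by enough copies of `b` must embed in the
first block. -/
lemma confine (b : γ) : ∀ (w : List γ) (Z v : List γ) (q : ℕ), b ∉ w → b ∉ v →
    (v ++ List.replicate q b) <+ w ++ b :: Z → Z.count b < q → v <+ w := by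
  intro w
  induction w with
  | nil =>
    intro Z v q _ hbv h hcount
    cases v with
    | nil => exact List.nil_sublist _
    | cons a v' =>
      exfalso
      have hab : a ≠ b := fun hab => hbv (by simp [hab])
      simp only [List.nil_append, List.cons_append] at h
      cases h with
      | cons _ h' =>
        have hc := h'.count_le b
        have h2 : b ∉ v' := fun hb => hbv (by simp [hb])
        have h3 : List.count b (a :: (v' ++ List.replicate q b)) = q := by
          simp [List.count_cons, List.count_append,
            List.count_eq_zero_of_not_mem h2, (Ne.symm hab), hab]
        omega
      | cons_cons _ _ => exact hab rfl
  | cons c w' ih =>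
    intro Z v q hbw hbv h hcount
    have hcb : c ≠ b := fun hcb => hbw (by simp [hcb])
    have hbw' : b ∉ w' := fun hb => hbw (by simp [hb])
    cases v with
    | nil => exact List.nil_sublist _
    | cons a v' =>
      have hbv' : b ∉ v' := fun hb => hbv (by simp [hb])
      rw [List.cons_append] at h
      simp only [List.cons_append] at h
      cases h with
      | cons _ h' =>
        exact (ih Z (a :: v') q hbw' hbv h' hcount).cons c
      | cons_cons _ h' =>
        exact List.Sublist.cons₂ _ (ih Z v' q hbw' hbv' h' hcount)

/-- Key confinement: if the test word embeds into the joined word, then `v` is a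
subword of block `i`. -/
lemma key_confine (b : γ) : ∀ (L : List (List γ)) (i : ℕ) (hi : i < L.length) (v : List γ),
    (∀ w ∈ L, b ∉ w) → b ∉ v →
    (List.replicate i b ++ v ++ List.replicate (L.length - 1 - i) b) <+ joinB b L →
    v <+ L[i] := by
  intro L
  induction L with
  | nil => intro i hi; simp at hi
  | cons w ws ih =>
    intro i hi v hfree hbv h
    have hbw : b ∉ w := hfree w (by simp)
    cases i with
    | zero =>
      cases ws with
      | nil => simpa [joinB] using h
      | cons x ws' =>
        have hj : joinB b (w :: x :: ws') = w ++ (b :: joinB b (x :: ws')) := rfl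
        rw [hj] at h
        simp only [List.replicate, List.nil_append, List.length_cons] at h
        have hcount : (joinB b (x :: ws')).count b < (w :: x :: ws').length - 1 - 0 := by
          rw [count_joinB b (x :: ws') (by simp) (fun u hu => hfree u (by simp [hu]))]
          simp
        have := confine b w (joinB b (x :: ws')) v _ hbw hbv (by simpa using h) hcount
        simpa using this
    | succ i' =>
      cases ws with
      | nil => simp at hi
      | cons x ws' =>
        have hj : joinB b (w :: x :: ws') = w ++ (b :: joinB b (x :: ws')) := rfl
        rw [hj] at h
        have h2 : (List.replicate (i' + 1) b ++ v ++
            List.replicate ((w :: x :: ws').length - 1 - (i' + 1)) b)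
            = b :: (List.replicate i' b ++ v ++
              List.replicate ((x :: ws').length - 1 - i') b) := by
          simp [List.replicate_succ, List.length_cons]
        rw [h2] at h
        have h3 := strip_one b w _ _ hbw h
        have hi' : i' < (x :: ws').length := by simpa using hi
        have := ih i' hi' v (fun u hu => hfree u (by simp [hu])) hbv h3
        simpa using this

/-- Reflection of sublists along an injective map. -/
lemma sublist_of_map_sublist_map {α β : Type*} {g : α → β} (hg : Function.Injective g) :
    ∀ (w u : List α), (u.map g) <+ (w.map g) → u <+ w := by
  intro w u h
  obtain ⟨u', hu', heq⟩ := List.sublist_map_iff.mp h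
  have : u = u' := (List.map_injective_iff.mpr hg) heq
  rw [this]
  exact hu'

/-- `Good k n N`: there are `N` words over a `k`-letter alphabet that are pairwise
inequivalent under Simon's congruence `∼ₙ`. -/
def Good (k n N : ℕ) : Prop :=
  ∃ f : Fin N → List (Fin k), ∀ i j, SimonCong n (f i) (f j) → i = j

lemma good_one (n : ℕ) : Good 1 n (n + 1) := by
  refine ⟨fun i => List.replicate i.val (0 : Fin 1), fun i j h => ?_⟩
  have hle : ∀ (a b : Fin (n+1)), SimonCong n (List.replicate a.val (0 : Fin 1))
      (List.replicate b.val (0 : Fin 1)) → a.val ≤ b.val := by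
    intro a b hab
    have h1 : List.replicate a.val (0 : Fin 1) <+ List.replicate b.val (0 : Fin 1) := by
      apply (hab (List.replicate a.val 0) (by simp [Nat.lt_succ_iff.mp a.isLt])).mp
      exact List.Sublist.refl _
    exact (List.replicate_sublist_replicate 0).mp h1
  have h1 := hle i j h
  have h2 := hle j i (fun w hw => (h w hw).symm)
  exact Fin.ext (le_antisymm h1 h2)

lemma good_step {k n' N : ℕ} (m : ℕ) (hm : 1 ≤ m) (h : Good k n' N) :
    Good (k + 1) (n' + (m - 1)) (N ^ m) := by
  obtain ⟨f, hf⟩ := h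
  set b : Fin (k+1) := 0 with hb
  -- blocks of a tuple
  set Blocks : (Fin m → Fin N) → List (List (Fin (k+1))) :=
    fun t => List.ofFn (fun i : Fin m => (f (t i)).map Fin.succ) with hBlocks
  set F : (Fin m → Fin N) → List (Fin (k+1)) := fun t => joinB b (Blocks t) with hF
  have hlen : ∀ t, (Blocks t).length = m := by intro t; simp [hBlocks]
  have hne : ∀ t, Blocks t ≠ [] := by
    intro t h0
    have := hlen t
    rw [h0] at this
    simp at this
    omega
  have hfree : ∀ t, ∀ w ∈ Blocks t, b ∉ w := by
    intro t w hw hbw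
    simp only [hBlocks, List.mem_ofFn] at hw
    obtain ⟨i, rfl⟩ := hw
    simp only [List.mem_map] at hbw
    obtain ⟨a, _, ha⟩ := hbw
    exact Fin.succ_ne_zero a ha
  have hget : ∀ t (i : Fin m), (Blocks t)[(i : ℕ)]'(by rw [hlen]; exact i.isLt)
      = (f (t i)).map Fin.succ := by
    intro t i
    simp [hBlocks]
  -- the key iff
  have key : ∀ (t : Fin m → Fin N) (i : Fin m) (u : List (Fin k)),
      ((List.replicate i.val b ++ u.map Fin.succ ++
        List.replicate (m - 1 - i.val) b) <+ F t) ↔ u <+ f (t i) := by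
    intro t i u
    have hibound : (i : ℕ) < (Blocks t).length := by rw [hlen]; exact i.isLt
    have hbu : b ∉ u.map Fin.succ := by
      intro hbu
      simp only [List.mem_map] at hbu
      obtain ⟨a, _, ha⟩ := hbu
      exact Fin.succ_ne_zero a ha
    constructor
    · intro hT
      have := key_confine b (Blocks t) i.val hibound (u.map Fin.succ) (hfree t) hbu
        (by rw [hlen]; exact hT)
      rw [hget t i] at this
      exact sublist_of_map_sublist_map (Fin.succ_injective k) _ _ this
    · intro hu
      have hsub : (u.map Fin.succ) <+ (Blocks t)[(i:ℕ)]'hibound := by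
        rw [hget t i]; exact hu.map Fin.succ
      have := key_build b (Blocks t) i.val hibound (u.map Fin.succ) (hne t) (hfree t) hsub
      rw [hlen] at this
      exact this
  -- main injectivity modulo the congruence
  have main : ∀ t₁ t₂, SimonCong (n' + (m-1)) (F t₁) (F t₂) → t₁ = t₂ := by
    intro t₁ t₂ hcong
    funext i
    apply hf
    intro u hu
    have hTlen : (List.replicate i.val b ++ u.map Fin.succ ++
        List.replicate (m - 1 - i.val) b).length ≤ n' + (m - 1) := by
      have : (i : ℕ) ≤ m - 1 := by have := i.isLt; omega
      simp only [List.length_append, List.length_replicate, List.length_map]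
      omega
    rw [← key t₁ i u, ← key t₂ i u]
    exact hcong _ hTlen
  -- repackage along the equivalence `Fin (N^m) ≃ (Fin m → Fin N)`
  obtain ⟨e⟩ : Nonempty (Fin (N ^ m) ≃ (Fin m → Fin N)) := ⟨finFunctionFinEquiv.symm⟩
  exact ⟨fun a => F (e a), fun a₁ a₂ h12 => e.injective (main _ _ h12)⟩

/-- ceiling of `n / (k+2)` -/
def mfun (k n : ℕ) : ℕ := (n + k + 1) / (k + 2)

/-- The recursively-defined size of our family. -/
def Nk : ℕ → ℕ → ℕ
  | 0, _ => 1
  | 1, n => n + 1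
  | (k+2), n => Nk (k+1) (n - mfun k n + 1) ^ (mfun k n)

lemma mfun_facts {k n : ℕ} (hn : k + 2 ≤ n) :
    1 ≤ mfun k n ∧ mfun k n ≤ n ∧ k + 1 ≤ n - mfun k n + 1 ∧
    n ≤ mfun k n * (k+2) ∧ mfun k n * (k+2) ≤ n + k + 1 := by
  set m := mfun k n with hm
  have h1 := Nat.div_add_mod (n + k + 1) (k + 2)
  have h2 : (n + k + 1) % (k + 2) < k + 2 := Nat.mod_lt _ (by omega)
  have h3 : m * (k+2) = (k + 2) * ((n + k + 1) / (k + 2)) := by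
    rw [hm, Nat.mul_comm]; rfl
  have hub : m * (k+2) ≤ n + k + 1 := by omega
  have hlb : n ≤ m * (k+2) := by omega
  have hm1 : 1 ≤ m := by
    by_contra h
    have : m = 0 := by omega
    rw [this] at hlb
    omega
  have hkey : m + k ≤ n := by
    rcases Nat.lt_or_ge m 2 with h | h
    · have : m = 1 := by omega
      omega
    · have e1 : m * (k + 2) = m * k + 2 * m := by ring
      have e2 : 2 * k ≤ m * k := Nat.mul_le_mul_right k h
      omega
  exact ⟨hm1, by omega, by omega, hlb, hub⟩

lemma good_Nk : ∀ k n, 1 ≤ k → k ≤ n → Good k n (Nk k n) := by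
  intro k
  induction k with
  | zero => omega
  | succ k ih =>
    intro n _ hn
    rcases Nat.eq_zero_or_pos k with rfl | hk
    · exact good_one n
    · obtain ⟨k', rfl⟩ : ∃ k', k = k' + 1 := ⟨k - 1, by omega⟩
      obtain ⟨hm1, hmn, hrest, _, _⟩ := mfun_facts (k := k') (n := n) hn
      set m := mfun k' n with hm
      have hprev : Good (k' + 1) (n - m + 1) (Nk (k' + 1) (n - m + 1)) :=
        ih (n - m + 1) (by omega) (by omega)
      have hstep := good_step m hm1 hprev
      have hbudget : (n - m + 1) + (m - 1) = n := by omega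
      rw [hbudget] at hstep
      exact hstep

/-- The quotient by Simon's congruence is finite. -/
lemma finite_quotient (k n : ℕ) : Finite (Quotient (simonSetoid (Fin k) n)) := by
  classical
  have hS : {l : List (Fin k) | l.length ≤ n}.Finite := List.finite_length_le (Fin k) n
  have : Finite {l : List (Fin k) | l.length ≤ n} := hS.to_subtype
  set φ : Quotient (simonSetoid (Fin k) n) → ({l : List (Fin k) | l.length ≤ n} → Prop) :=
    Quotient.lift (fun x => fun w => (w : List (Fin k)) <+ x)
      (by
        intro x y hxy
        funext w
        exact propext (hxy (w : List (Fin k)) w.2)) with hφ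
  have hinj : Function.Injective φ := by
    intro q₁ q₂ h
    induction q₁ using Quotient.inductionOn with
    | h x =>
      induction q₂ using Quotient.inductionOn with
      | h y =>
        apply Quotient.sound
        intro w hw
        have := congrFun h ⟨w, hw⟩
        simp only [hφ, Quotient.lift_mk] at this
        constructor
        · intro h1; rw [← this]; exact h1
        · intro h1; rw [this]; exact h1
  exact Finite.of_injective φ hinj

lemma card_ge (k n N : ℕ) (h : Good k n N) : N ≤ simonIndex k n := by
  obtain ⟨f, hf⟩ := h
  have : Finite (Quotient (simonSetoid (Fin k) n)) := finite_quotient k n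
  have hinj : Function.Injective
      (fun i : Fin N => (Quotient.mk (simonSetoid (Fin k) n) (f i))) := by
    intro i j hij
    exact hf i j (Quotient.exact hij)
  have := Nat.card_le_card_of_injective _ hinj
  simpa [simonIndex, Nat.card_eq_fintype_card] using this

lemma Nk_pos : ∀ k n, 1 ≤ Nk k n := by
  intro k
  induction k with
  | zero => intro n; simp [Nk]
  | succ k ih =>
    intro n
    match k with
    | 0 => simp [Nk]
    | k' + 1 =>
      show 1 ≤ Nk (k' + 2) n
      rw [Nk]
      exact Nat.one_le_pow _ _ (ih _)

/-- The analytic induction: our family size beats the claimed bound. -/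
lemma analytic : ∀ (k n : ℕ), 1 ≤ k → k ≤ n →
    ((n : ℝ) / k) ^ (k - 1) * Real.logb 2 ((n : ℝ) / k) < Real.logb 2 (Nk k n) := by
  intro k
  induction k with
  | zero => omega
  | succ k ih =>
    intro n h1 hn
    rcases Nat.eq_zero_or_pos k with rfl | hk
    · -- base case : alphabet of size 1
      have hn1 : (1:ℝ) ≤ (n:ℝ) := by exact_mod_cast hn
      have : Nk 1 n = n + 1 := rfl
      rw [this]
      have hcast1 : ((0:ℕ) + 1 : ℕ) = (1 : ℕ) := rfl
      rw [hcast1]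
      simp only [Nat.cast_one, div_one, Nat.sub_self, pow_zero, one_mul]
      have : ((n:ℝ)) < ((n+1 : ℕ) : ℝ) := by push_cast; linarith
      exact Real.logb_lt_logb (by norm_num) (by linarith) this
    · obtain ⟨k', rfl⟩ : ∃ k', k = k' + 1 := ⟨k - 1, by omega⟩
      -- alphabet size K = k' + 2
      obtain ⟨hm1, hmn, hrest, hlb, hub⟩ := mfun_facts (k := k') (n := n) hn
      set m := mfun k' n with hm
      set n' := n - m + 1 with hn'
      have hNk : Nk (k' + 2) n = Nk (k' + 1) n' ^ m := by rw [Nk]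
      -- real number facts
      have hK : (0:ℝ) < (k' : ℝ) + 2 := by positivity
      have hK1 : (0:ℝ) < (k' : ℝ) + 1 := by positivity
      have hcast : (n' : ℝ) = (n : ℝ) - (m : ℝ) + 1 := by
        rw [hn']
        push_cast [Nat.cast_sub hmn]
        ring
      set s : ℝ := (n : ℝ) / ((k' : ℝ) + 2) with hs
      set s' : ℝ := (n' : ℝ) / ((k' : ℝ) + 1) with hs'
      have hs1 : 1 ≤ s := by
        rw [hs, le_div_iff₀ hK]
        have : ((k' + 2 : ℕ) : ℝ) ≤ (n : ℝ) := by exact_mod_cast hn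
        push_cast at this
        linarith
      have hsm : s ≤ (m : ℝ) := by
        rw [hs, div_le_iff₀ hK]
        have : (n : ℝ) ≤ (m : ℝ) * ((k' : ℝ) + 2) := by exact_mod_cast hlb
        linarith
      have hss' : s < s' := by
        rw [hs, hs', div_lt_div_iff₀ hK hK1, hcast]
        have : (m : ℝ) * ((k' : ℝ) + 2) ≤ (n : ℝ) + (k' : ℝ) + 1 := by exact_mod_cast hub
        nlinarith
      have hs'1 : 1 ≤ s' := le_of_lt (lt_of_le_of_lt hs1 hss')
      -- apply IH at (k'+1, n')
      have hih := ih n' (by omega) (by omega)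
      have hexp : (k' + 1) - 1 = k' := by omega
      rw [hexp] at hih
      have hcastk : ((k' + 1 : ℕ) : ℝ) = (k' : ℝ) + 1 := by push_cast; ring
      have hih' : s' ^ k' * Real.logb 2 s' < Real.logb 2 (Nk (k' + 1) n') := by
        rw [hs', ← hcastk]; exact hih
      -- unfold the RHS
      have hNpos : (1:ℝ) ≤ (Nk (k' + 1) n' : ℝ) := by exact_mod_cast Nk_pos (k'+1) n'
      have hrhs : Real.logb 2 (Nk (k' + 2) n) =
          (m : ℝ) * Real.logb 2 (Nk (k' + 1) n') := by
        rw [hNk]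
        push_cast
        rw [Real.logb_pow]
      rw [hrhs]
      have hexp2 : (k' + 2) - 1 = k' + 1 := by omega
      rw [hexp2]
      rw [show ((k' + 1 + 1 : ℕ) : ℝ) = (k' : ℝ) + 2 by push_cast; ring, ← hs]
      -- chain of inequalities
      have hA : (0:ℝ) ≤ s ^ k' * Real.logb 2 s :=
        mul_nonneg (pow_nonneg (by linarith) _) (Real.logb_nonneg (by norm_num) hs1)
      have hAB : s ^ k' * Real.logb 2 s ≤ s' ^ k' * Real.logb 2 s' := by
        apply mul_le_mul
        · exact pow_le_pow_left₀ (by linarith) (le_of_lt hss') _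
        · exact Real.logb_le_logb_of_le (by norm_num) (by linarith) (le_of_lt hss')
        · exact Real.logb_nonneg (by norm_num) hs1
        · exact pow_nonneg (by linarith) _
      calc s ^ (k' + 1) * Real.logb 2 s = s * (s ^ k' * Real.logb 2 s) := by ring
        _ ≤ (m : ℝ) * (s' ^ k' * Real.logb 2 s') := by
            apply mul_le_mul hsm hAB hA (by linarith)
        _ < (m : ℝ) * Real.logb 2 (Nk (k' + 1) n') := by
            apply mul_lt_mul_of_pos_left hih'
            have : (1:ℝ) ≤ (m:ℝ) := by exact_mod_cast hm1
            linarith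

end SimonLB

theorem simon_index_lower_bound (k n : ℕ) (hk : 0 < k) (hn : 0 < n) :
    Real.logb 2 (simonIndex k n)
      > ((n : ℝ) / k) ^ (k - 1) * Real.logb 2 ((n : ℝ) / k) := by
  have hfin : Finite (Quotient (simonSetoid (Fin k) n)) := SimonLB.finite_quotient k n
  rcases le_or_gt k n with hkn | hnk
  · -- main case : k ≤ n
    have h1 := SimonLB.analytic k n hk hkn
    have h2 := SimonLB.card_ge k n _ (SimonLB.good_Nk k n hk hkn)
    have h3 : (0:ℝ) < ((SimonLB.Nk k n : ℕ) : ℝ) := by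
      have := SimonLB.Nk_pos k n
      exact_mod_cast Nat.lt_of_lt_of_le Nat.zero_lt_one this
    have h4 : ((SimonLB.Nk k n : ℕ) : ℝ) ≤ ((simonIndex k n : ℕ) : ℝ) := by exact_mod_cast h2
    exact lt_of_lt_of_le h1 (Real.logb_le_logb_of_le (by norm_num) h3 h4)
  · -- degenerate case : n < k, the right-hand side is negative
    have hs0 : (0:ℝ) < (n:ℝ)/(k:ℝ) := by
      apply div_pos <;> [exact_mod_cast hn; exact_mod_cast hk]
    have hs1 : (n:ℝ)/(k:ℝ) < 1 := by
      rw [div_lt_one (by exact_mod_cast hk)]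
      exact_mod_cast hnk
    have hneg : ((n : ℝ) / k) ^ (k - 1) * Real.logb 2 ((n : ℝ) / k) < 0 :=
      mul_neg_of_pos_of_neg (pow_pos hs0 _) (Real.logb_neg (by norm_num) hs0 hs1)
    have hC : 1 ≤ simonIndex k n := by
      have : Nonempty (Quotient (simonSetoid (Fin k) n)) :=
        ⟨Quotient.mk (simonSetoid (Fin k) n) []⟩
      exact Nat.card_pos
    have hlhs : 0 ≤ Real.logb 2 (simonIndex k n) := by
      apply Real.logb_nonneg (by norm_num)
      exact_mod_cast hC
    linarith
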